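/- Maximality of the saturation among d-saturation processes: let S be an assignment which, to every d-space (X, dX), assigns a set S(X, dX) of continuous paths I → X such that (i) (X, S(X, dX)) is a d-space and dX ⊆ S(X, dX); (ii) for every morphism of d-spaces f : (X, dX) → (Y, dY), f maps S(X, dX) into S(Y, dY); (iii) S(I, dI↑) = dI↑, where I↑ = (I, dI↑) is the directed interval; (iv) (locality) for every subset Y ⊆ X with the subspace topology, setting dY = {p ∈ dX : p(I) ⊆ Y}, every path in S(X, dX) with image contained in Y belongs to S(Y, dY). Then for every d-space (X, dX), every path in S(X, dX) is weakly directed in (X, dX), i.e., S(X, dX) ⊆ d̂X. -/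

import Mathlib

open unitInterval Topology Set

/-- Concatenation of two continuous paths `p q : C(I, X)` with `p 1 = q 0`,
traversing `p` on `[0, 1/2]` and `q` on `[1/2, 1]` (both at double speed). -/
noncomputable def concatPath {X : Type*} [TopologicalSpace X]
    (p q : C(unitInterval, X)) (h : p 1 = q 0) : C(unitInterval, X) :=
  ((⟨p, rfl, rfl⟩ : Path (p 0) (p 1)).trans
    ((⟨q, rfl, rfl⟩ : Path (q 0) (q 1)).cast h rfl)).toContinuousMap

/-- A d-space structure on a topological space `X`: a set of continuous paths
`I → X` containing the constant paths, closed under concatenation and under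
precomposition with continuous non-decreasing maps `I → I`. -/
structure DSpace (X : Type*) [TopologicalSpace X] where
  d : Set C(unitInterval, X)
  const_mem : ∀ x : X, ContinuousMap.const unitInterval x ∈ d
  concat_mem : ∀ p ∈ d, ∀ q ∈ d, ∀ h : p 1 = q 0, concatPath p q h ∈ d
  reparam_mem : ∀ p ∈ d, ∀ φ : C(unitInterval, unitInterval), Monotone ⇑φ → p.comp φ ∈ d

/-- `c` is a directed function on the (open) set `U` for the set of directed
paths `d`: it is continuous on `U` and non-decreasing along every directed path
with image contained in `U`. -/
def IsDirectedFn {X : Type*} [TopologicalSpace X] (d : Set C(unitInterval, X))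
    (U : Set X) (c : X → unitInterval) : Prop :=
  ContinuousOn c U ∧ ∀ p ∈ d, Set.range ⇑p ⊆ U → Monotone (c ∘ ⇑p)

/-- A path `p` is weakly directed when, for every directed function `c` on an
open `U`, the map `c ∘ p` is locally non-decreasing on `p ⁻¹' U`. -/
def IsWeaklyDirected {X : Type*} [TopologicalSpace X] (d : Set C(unitInterval, X))
    (p : C(unitInterval, X)) : Prop :=
  ∀ U : Set X, IsOpen U → ∀ c : X → unitInterval, IsDirectedFn d U c →
    ∀ t : unitInterval, p t ∈ U →
      ∃ V ∈ 𝓝 t, V ⊆ ⇑p ⁻¹' U ∧ MonotoneOn (c ∘ ⇑p) V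

/-- The set `d̂X` of weakly directed paths. -/
def satPaths {X : Type*} [TopologicalSpace X] (d : Set C(unitInterval, X)) :
    Set C(unitInterval, X) :=
  {p | IsWeaklyDirected d p}

/-- A set of directed paths is saturated when every weakly directed path is directed. -/
def IsSaturated {X : Type*} [TopologicalSpace X] (d : Set C(unitInterval, X)) : Prop :=
  satPaths d = d

/-- The directed paths of the subspace `Y ⊆ X` induced by a set `d` of directed
paths on `X`: those paths into `Y` that are directed in `X`. -/
def subPaths {X : Type*} [TopologicalSpace X] (d : Set C(unitInterval, X)) (Y : Set X) :
    Set C(unitInterval, Y) :=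
  {q | (⟨Subtype.val, continuous_subtype_val⟩ : C(Y, X)).comp q ∈ d}

/-- The directed interval `I↑`: non-decreasing continuous self-maps of `I`. -/
def dIup : Set C(unitInterval, unitInterval) := {φ | Monotone ⇑φ}

lemma concatPath_apply {X : Type*} [TopologicalSpace X]
    (p q : C(unitInterval, X)) (h : p 1 = q 0) (t : unitInterval) :
    concatPath p q h t =
      if h' : (t : ℝ) ≤ 1 / 2 then p ⟨2 * t, (mul_pos_mem_iff zero_lt_two).2 ⟨t.2.1, h'⟩⟩
      else q ⟨2 * t - 1, two_mul_sub_one_mem_iff.2 ⟨(not_le.1 h').le, t.2.2⟩⟩ := by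
  show (Path.trans _ _) t = _
  rw [Path.trans_apply]
  split_ifs <;> rfl

lemma comp_concat {X Y : Type*} [TopologicalSpace X] [TopologicalSpace Y]
    (f : C(X, Y)) (p q : C(unitInterval, X)) (h : p 1 = q 0) :
    f.comp (concatPath p q h) =
      concatPath (f.comp p) (f.comp q) (by simp [ContinuousMap.comp_apply, h]) := by
  ext t
  simp only [ContinuousMap.comp_apply, concatPath_apply]
  split_ifs <;> rfl

lemma concat_monotone (p q : C(unitInterval, unitInterval)) (h : p 1 = q 0)
    (hp : Monotone ⇑p) (hq : Monotone ⇑q) : Monotone ⇑(concatPath p q h) := by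
  intro x y hxy
  have hxy' : (x : ℝ) ≤ y := hxy
  rw [concatPath_apply, concatPath_apply]
  split_ifs with h1 h2 h2
  · exact hp (by rw [← Subtype.coe_le_coe]; linarith)
  · calc p _ ≤ p 1 := hp (by rw [← Subtype.coe_le_coe]; push_cast; linarith [x.2.2])
      _ = q 0 := h
      _ ≤ q _ := hq (by rw [← Subtype.coe_le_coe]; push_cast; linarith)
  · exact absurd (le_trans hxy' h2) h1
  · exact hq (by rw [← Subtype.coe_le_coe]; linarith)

/-- `dIup` as a d-space structure. -/
noncomputable def dIupD : DSpace unitInterval where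
  d := dIup
  const_mem := fun _ => monotone_const
  concat_mem := fun p hp q hq h => concat_monotone p q h hp hq
  reparam_mem := fun p hp φ hφ => show Monotone (⇑p ∘ ⇑φ) from Monotone.comp hp hφ

/-- The subspace d-space structure. -/
noncomputable def subD {X : Type*} [TopologicalSpace X] (D : DSpace X) (Y : Set X) :
    DSpace Y where
  d := subPaths D.d Y
  const_mem := fun y => by
    have : (⟨Subtype.val, continuous_subtype_val⟩ : C(Y, X)).comp
        (ContinuousMap.const unitInterval y) = ContinuousMap.const unitInterval (y : X) := rfl
    show _ ∈ D.d
    rw [this]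
    exact D.const_mem _
  concat_mem := fun p hp q hq h => by
    show _ ∈ D.d
    rw [comp_concat]
    exact D.concat_mem _ hp _ hq _
  reparam_mem := fun p hp φ hφ => by
    show _ ∈ D.d
    rw [← ContinuousMap.comp_assoc]
    exact D.reparam_mem _ hp φ hφ

/-- Maximality of the saturation among d-saturation processes: if `S` enlarges each
d-space `(X, dX)` to a d-space `(X, S(X, dX))`, functorially, fixing the directed
interval, and satisfying the locality condition for subspaces, then
`S(X, dX) ⊆ d̂X` for every d-space `(X, dX)`. -/
theorem stmt_19
    (S : ∀ (X : Type) [TopologicalSpace X], Set C(unitInterval, X) → Set C(unitInterval, X))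
    -- (i) `(X, S(X, dX))` is a d-space containing `dX`:
    (hsup : ∀ (X : Type) [TopologicalSpace X] (D : DSpace X), D.d ⊆ S X D.d)
    (hdsp : ∀ (X : Type) [TopologicalSpace X] (D : DSpace X),
      (∀ x : X, ContinuousMap.const unitInterval x ∈ S X D.d) ∧
      (∀ p ∈ S X D.d, ∀ q ∈ S X D.d, ∀ h : p 1 = q 0, concatPath p q h ∈ S X D.d) ∧
      (∀ p ∈ S X D.d, ∀ φ : C(unitInterval, unitInterval), Monotone ⇑φ →
        p.comp φ ∈ S X D.d))
    -- (ii) functoriality: morphisms `(X, dX) → (Y, dY)` are morphisms on `S`-structures: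
    (hfunc : ∀ (X Y : Type) [TopologicalSpace X] [TopologicalSpace Y]
      (D : DSpace X) (E : DSpace Y) (f : C(X, Y)),
      (∀ p ∈ D.d, f.comp p ∈ E.d) → ∀ p ∈ S X D.d, f.comp p ∈ S Y E.d)
    -- (iii) `S` fixes the directed interval:
    (hI : S unitInterval dIup = dIup)
    -- (iv) locality: paths of `S(X, dX)` with image in a subspace `Y` are in `S(Y, dY)`:
    (hloc : ∀ (X : Type) [TopologicalSpace X] (D : DSpace X) (Y : Set X),
      ∀ p ∈ S X D.d, ∀ hr : ∀ t, p t ∈ Y,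
        (ContinuousMap.mk (fun t => (⟨p t, hr t⟩ : Y)) (by fun_prop)) ∈ S Y (subPaths D.d Y)) :
    ∀ (X : Type) [TopologicalSpace X] (D : DSpace X), S X D.d ⊆ satPaths D.d := by
  intro X _ D p hp U hU c hc t htU
  -- choose a metric ball around `t` inside `p ⁻¹' U`
  have hUopen : IsOpen (⇑p ⁻¹' U) := hU.preimage p.continuous
  obtain ⟨ε, εpos, hball⟩ := Metric.isOpen_iff.mp hUopen t htU
  set a0 : ℝ := max ((t : ℝ) - ε / 2) 0 with ha0
  set b0 : ℝ := min ((t : ℝ) + ε / 2) 1 with hb0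
  have ht0 : (0 : ℝ) ≤ t := t.2.1
  have ht1 : (t : ℝ) ≤ 1 := t.2.2
  have ha0mem : a0 ∈ unitInterval := ⟨le_max_right _ _, max_le (by linarith) zero_le_one⟩
  have hb0mem : b0 ∈ unitInterval := ⟨le_min (by linarith) zero_le_one, min_le_right _ _⟩
  set a : unitInterval := ⟨a0, ha0mem⟩
  set b : unitInterval := ⟨b0, hb0mem⟩
  have hab : a0 < b0 := lt_min (max_lt (by linarith) (by linarith)) (max_lt (by linarith) (by linarith))
  have hta : a0 ≤ t := max_le (by linarith) ht0
  have htb : (t : ℝ) ≤ b0 := le_min (by linarith) ht1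
  -- the interval `[a, b]` is in the ball
  have hIccball : ∀ s : unitInterval, s ∈ Icc a b → s ∈ Metric.ball t ε := by
    intro s hs
    have h1 : a0 ≤ (s : ℝ) := hs.1
    have h2 : (s : ℝ) ≤ b0 := hs.2
    have h3 : (t : ℝ) - ε / 2 ≤ a0 := le_max_left _ _
    have h4 : b0 ≤ (t : ℝ) + ε / 2 := min_le_left _ _
    simp only [Metric.mem_ball, Subtype.dist_eq, Real.dist_eq]
    rw [abs_lt]; constructor <;> linarith
  -- the interval `[a, b]` is a neighborhood of `t`
  have hVnhds : Icc a b ∈ 𝓝 t := by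
    rw [Metric.mem_nhds_iff]
    refine ⟨ε / 2, by linarith, fun s hs => ?_⟩
    simp only [Metric.mem_ball, Subtype.dist_eq, Real.dist_eq, abs_lt] at hs
    have hs0 : (0 : ℝ) ≤ s := s.2.1
    have hs1 : (s : ℝ) ≤ 1 := s.2.2
    exact ⟨max_le (by linarith) hs0, le_min (by linarith) hs1⟩
  -- the affine reparametrization onto `[a, b]`
  have hφmem : ∀ s : unitInterval, a0 + (s : ℝ) * (b0 - a0) ∈ unitInterval := by
    intro s
    have hs0 : (0 : ℝ) ≤ s := s.2.1
    have hs1 : (s : ℝ) ≤ 1 := s.2.2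
    constructor
    · nlinarith [ha0mem.1]
    · nlinarith [hb0mem.2]
  set φ : C(unitInterval, unitInterval) :=
    ⟨fun s => ⟨a0 + (s : ℝ) * (b0 - a0), hφmem s⟩, by fun_prop⟩ with hφdef
  have hφmono : Monotone ⇑φ := by
    intro u v huv
    rw [← Subtype.coe_le_coe]
    have : (u : ℝ) ≤ v := huv
    simp only [φ, ContinuousMap.coe_mk]
    nlinarith
  have hφIcc : ∀ s : unitInterval, φ s ∈ Icc a b := by
    intro s
    have hs0 : (0 : ℝ) ≤ s := s.2.1
    have hs1 : (s : ℝ) ≤ 1 := s.2.2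
    constructor
    · show a0 ≤ a0 + (s : ℝ) * (b0 - a0); nlinarith
    · show a0 + (s : ℝ) * (b0 - a0) ≤ b0; nlinarith
  -- the reparametrized path lies in `U`
  set q : C(unitInterval, X) := p.comp φ with hqdef
  have hqS : q ∈ S X D.d := (hdsp X D).2.2 p hp φ hφmono
  have hqU : ∀ s, q s ∈ U := fun s => hball (hIccball _ (hφIcc s))
  -- lift to the subspace `U` and push forward along `c`
  have hqtilde := hloc X D U q hqS hqU
  have hcd : ContinuousOn c U := hc.1
  set cU : C(U, unitInterval) := ⟨fun u => c u, hcd.restrict⟩ with hcUdef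
  have hmor : ∀ r ∈ (subD D U).d, cU.comp r ∈ dIupD.d := by
    intro r hr
    have hrange : Set.range ⇑((⟨Subtype.val, continuous_subtype_val⟩ : C(U, X)).comp r) ⊆ U := by
      rintro _ ⟨s, rfl⟩
      exact (r s).2
    exact hc.2 _ hr hrange
  have hmem := hfunc U unitInterval (subD D U) dIupD cU hmor _ hqtilde
  rw [show dIupD.d = dIup from rfl, hI] at hmem
  have hmono : Monotone fun s : unitInterval => c (q s) := hmem
  -- conclude monotonicity on `Icc a b`
  refine ⟨Icc a b, hVnhds, fun s hs => hball (hIccball s hs), ?_⟩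
  intro x hx y hy hxy
  have hba : b0 - a0 ≠ 0 := by linarith
  have hsx : ((x : ℝ) - a0) / (b0 - a0) ∈ unitInterval := by
    constructor
    · apply div_nonneg (by have : a0 ≤ (x:ℝ) := hx.1; linarith) (by linarith)
    · rw [div_le_one (by linarith)]
      have : (x : ℝ) ≤ b0 := hx.2
      linarith
  have hsy : ((y : ℝ) - a0) / (b0 - a0) ∈ unitInterval := by
    constructor
    · apply div_nonneg (by have : a0 ≤ (y:ℝ) := hy.1; linarith) (by linarith)
    · rw [div_le_one (by linarith)]
      have : (y : ℝ) ≤ b0 := hy.2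
      linarith
  have hphix : φ ⟨_, hsx⟩ = x := by
    apply Subtype.ext
    show a0 + ((x : ℝ) - a0) / (b0 - a0) * (b0 - a0) = x
    rw [div_mul_cancel₀ _ hba]; ring
  have hphiy : φ ⟨_, hsy⟩ = y := by
    apply Subtype.ext
    show a0 + ((y : ℝ) - a0) / (b0 - a0) * (b0 - a0) = y
    rw [div_mul_cancel₀ _ hba]; ring
  have hsxy : (⟨_, hsx⟩ : unitInterval) ≤ ⟨_, hsy⟩ := by
    rw [← Subtype.coe_le_coe]
    have hxy' : (x : ℝ) ≤ y := hxy
    show ((x : ℝ) - a0) / (b0 - a0) ≤ ((y : ℝ) - a0) / (b0 - a0)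
    gcongr
  have := hmono hsxy
  simp only [hqdef, ContinuousMap.comp_apply, hphix, hphiy] at this
  exact this
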